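/- Let η₁, …, η_n ∈ ℂ with |η_k| = 1 and Im η_k ≠ 0 for all k, indices mod n, and let F : {z₀, …, z_{n−1}} → ℂ satisfy for each k (indices mod n): (Re F(z_{k+1}) − Re F(z_k))·Re η_{k+1} + (Im F(z_{k+1}) − Im F(z_k))·Im η_{k+1} = 0. Then Σ_{k=0}^{n−1} (Re η_{k+1}/Im η_{k+1} − Re η_k/Im η_k)·Re F(z_k) = 0. -/

import Mathlib

/-- Identity (2.20): the s-holomorphicity relations around a vertex imply the
telescoping identity exhibiting `Re F` as a discrete harmonic quantity. -/
theorem sholomorphic_cyclic_identity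
    (n : ℕ) [NeZero n] (η F : ZMod n → ℂ)
    (habs : ∀ k, ‖η k‖ = 1)
    (him : ∀ k, (η k).im ≠ 0)
    (hshol : ∀ k : ZMod n,
      ((F (k + 1)).re - (F k).re) * (η (k + 1)).re
        + ((F (k + 1)).im - (F k).im) * (η (k + 1)).im = 0) :
    ∑ k : ZMod n,
        ((η (k + 1)).re / (η (k + 1)).im - (η k).re / (η k).im) * (F k).re
      = 0 := by
  have key : ∀ k : ZMod n,
      ((η (k+1)).re / (η (k+1)).im) * ((F k).re - (F (k+1)).re)
        = (F (k+1)).im - (F k).im := by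
    intro k
    have h := hshol k
    have hi := him (k+1)
    field_simp
    nlinarith [h]
  have h1 : ∑ k : ZMod n, ((η k).re / (η k).im) * (F k).re
      = ∑ k : ZMod n, ((η (k+1)).re / (η (k+1)).im) * (F (k+1)).re :=
    Fintype.sum_equiv (Equiv.subRight (1 : ZMod n)) _ _ (fun k => by simp)
  have h2 : ∑ k : ZMod n, ((F (k+1)).im - (F k).im) = 0 := by
    have h3 : ∑ k : ZMod n, (F (k+1)).im = ∑ k : ZMod n, (F k).im :=
      Fintype.sum_equiv (Equiv.addRight (1 : ZMod n)) _ _ (fun k => rfl)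
    rw [Finset.sum_sub_distrib, h3, sub_self]
  calc ∑ k : ZMod n,
        ((η (k + 1)).re / (η (k + 1)).im - (η k).re / (η k).im) * (F k).re
      = ∑ k : ZMod n, ((η (k+1)).re / (η (k+1)).im) * (F k).re
        - ∑ k : ZMod n, ((η k).re / (η k).im) * (F k).re := by
        rw [← Finset.sum_sub_distrib]; congr 1; ext k; ring
    _ = ∑ k : ZMod n, ((η (k+1)).re / (η (k+1)).im) * ((F k).re - (F (k+1)).re) := by
        rw [h1, ← Finset.sum_sub_distrib]; congr 1; ext k; ring
    _ = ∑ k : ZMod n, ((F (k+1)).im - (F k).im) := by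
        exact Finset.sum_congr rfl fun k _ => key k
    _ = 0 := h2
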